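/- Let p > 3 be an integer and ε ∈ (0,1). Then for all nonnegative real numbers u, v, |v^{p-2} - |v - u|^{p-2}| ≤ ε(1 + ε) v^{p-2} + C(p) ε^{-(p-3)} u^{p-2} for some constant C(p) depending only on p. -/
import Mathlib

open Finset

lemma key_pow (q : ℕ) (a b : ℝ) (hb : 0 ≤ b) (hab : b ≤ a) :
    a ^ q - b ^ q ≤ q * a ^ (q - 1) * (a - b) := by
  have ha : 0 ≤ a := hb.trans hab
  rw [← geom_sum₂_mul a b q]
  have hsum : (∑ i ∈ range q, a ^ i * b ^ (q - 1 - i)) ≤ q * a ^ (q - 1) := by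
    calc (∑ i ∈ range q, a ^ i * b ^ (q - 1 - i))
        ≤ ∑ _i ∈ range q, a ^ (q - 1) := by
          apply Finset.sum_le_sum
          intro i hi
          rw [Finset.mem_range] at hi
          calc a ^ i * b ^ (q - 1 - i) ≤ a ^ i * a ^ (q - 1 - i) := by
                gcongr
            _ = a ^ (q - 1) := by rw [← pow_add]; congr 1; omega
      _ = q * a ^ (q - 1) := by
          rw [Finset.sum_const, Finset.card_range, nsmul_eq_mul]
  exact mul_le_mul_of_nonneg_right hsum (sub_nonneg.2 hab)

lemma key_abs (q : ℕ) (a b : ℝ) (ha : 0 ≤ a) (hb : 0 ≤ b) :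
    |a ^ q - b ^ q| ≤ q * max a b ^ (q - 1) * |a - b| := by
  rcases le_total b a with h | h
  · rw [abs_of_nonneg (sub_nonneg.2 (pow_le_pow_left₀ hb h q)),
      abs_of_nonneg (sub_nonneg.2 h), max_eq_left h]
    exact key_pow q a b hb h
  · rw [abs_sub_comm, abs_of_nonneg (sub_nonneg.2 (pow_le_pow_left₀ ha h q)),
      abs_sub_comm a b, abs_of_nonneg (sub_nonneg.2 h), max_eq_right h]
    exact key_pow q b a ha h

/-- For an integer `p > 3`, there is `C = C(p) > 0` such that for every `ε ∈ (0,1)` and all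
nonnegative reals `u, v`,
`|v^{p-2} - |v - u|^{p-2}| ≤ ε(1 + ε) v^{p-2} + C ε^{-(p-3)} u^{p-2}`. -/
theorem stmt4 (p : ℕ) (hp : 3 < p) :
    ∃ C : ℝ, 0 < C ∧ ∀ ε : ℝ, 0 < ε → ε < 1 → ∀ u v : ℝ, 0 ≤ u → 0 ≤ v →
      |v ^ ((p : ℝ) - 2) - |v - u| ^ ((p : ℝ) - 2)| ≤
        ε * (1 + ε) * v ^ ((p : ℝ) - 2) + C * ε ^ (-((p : ℝ) - 3)) * u ^ ((p : ℝ) - 2) := by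
  set m : ℕ := p - 3 with hmdef
  have hm1 : 1 ≤ m := by omega
  set q : ℕ := m + 1 with hqdef
  set K : ℝ := q * 2 ^ m with hKdef
  have hK4 : (4 : ℝ) ≤ K := by
    have h1 : (2 : ℝ) ≤ (q : ℕ) := by exact_mod_cast (by omega : 2 ≤ q)
    have h2 : (2 : ℝ) ≤ 2 ^ m := by
      calc (2:ℝ) = 2 ^ 1 := (pow_one 2).symm
      _ ≤ 2 ^ m := pow_le_pow_right₀ one_le_two hm1
    nlinarith
  have hK0 : (0 : ℝ) < K := by linarith
  refine ⟨K ^ q, by positivity, ?_⟩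
  intro ε hε hε1 u v hu hv
  -- rewrite rpow as pow
  have hcast2 : ((p : ℝ) - 2) = (q : ℝ) := by
    have h : q = p - 2 := by omega
    rw [h, Nat.cast_sub (by omega : 2 ≤ p)]; norm_num
  have hcast3 : ((p : ℝ) - 3) = (m : ℝ) := by
    have h : m = p - 3 := hmdef
    rw [h, Nat.cast_sub (by omega : 3 ≤ p)]; norm_num
  rw [hcast2, hcast3, Real.rpow_neg hε.le]
  simp only [Real.rpow_natCast]
  set w : ℝ := |v - u| with hwdef
  have hKm : K = q * 2 ^ m := hKdef
  have hqm2 : q = m + 1 := hqdef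
  clear_value w K q m
  have hw : 0 ≤ w := hwdef ▸ abs_nonneg _
  obtain ⟨δ, hδdef⟩ : ∃ δ : ℝ, δ = ε / K := ⟨_, rfl⟩
  have hqm : q - 1 = m := by omega
  have hmax : max v w ≤ v + u := by
    rcases abs_cases (v - u) with ⟨h, _⟩ | ⟨h, _⟩ <;>
      rw [hwdef, h, max_le_iff] <;> constructor <;> linarith
  have hdiff : |v - w| ≤ u := by
    rcases le_total u v with h | h
    · rw [hwdef, abs_of_nonneg (by linarith : (0:ℝ) ≤ v - u)]
      simp [abs_of_nonneg hu]
    · rw [hwdef, abs_of_nonpos (by linarith : v - u ≤ 0)]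
      rw [abs_le]; constructor <;> linarith
  have key : |v ^ q - w ^ q| ≤ q * (v + u) ^ m * u := by
    calc |v ^ q - w ^ q| ≤ q * max v w ^ (q - 1) * |v - w| := key_abs q v w hv hw
      _ ≤ q * (v + u) ^ m * u := by
          rw [hqm]
          have h0 : (0:ℝ) ≤ max v w := le_max_of_le_left hv
          gcongr <;> first | exact hmax | exact hdiff | positivity
  have hδ0 : 0 < δ := hδdef ▸ div_pos hε hK0
  have hδ1 : δ ≤ 1 := by
    rw [hδdef, div_le_one hK0]; linarith
  have hKδ : K * δ = ε := by
    rw [hδdef]; field_simp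
  have hεm : (0:ℝ) < (ε ^ m)⁻¹ := by positivity
  have hKq : (0:ℝ) < K ^ q := pow_pos hK0 q
  have huq : (0:ℝ) ≤ u ^ q := pow_nonneg hu q
  have hvq : (0:ℝ) ≤ v ^ q := pow_nonneg hv q
  rcases le_or_gt u (δ * v) with hcase | hcase
  · -- small u case
    have huv : u ≤ v := hcase.trans (mul_le_of_le_one_left hv hδ1)
    have h1 : q * (v + u) ^ m * u ≤ q * (2 * v) ^ m * (δ * v) := by
      gcongr <;> first | positivity | linarith
    have h2 : (q : ℝ) * (2 * v) ^ m * (δ * v) = ε * v ^ q := by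
      rw [← hKδ, hKm, hqm2, mul_pow]
      push_cast
      ring
    have h3 : ε * v ^ q ≤ ε * (1 + ε) * v ^ q := by
      nlinarith [mul_nonneg (mul_nonneg hε.le hε.le) hvq]
    have h4 : (0:ℝ) ≤ K ^ q * (ε ^ m)⁻¹ * u ^ q := by positivity
    calc |v ^ q - w ^ q| ≤ q * (v + u) ^ m * u := key
      _ ≤ ε * v ^ q := by rw [← h2]; exact h1
      _ ≤ ε * (1 + ε) * v ^ q := h3
      _ ≤ _ := by linarith
  · -- large u case
    have hvu : v ≤ u / δ := by
      rw [le_div_iff₀ hδ0, mul_comm]; exact hcase.le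
    have huu : u ≤ u / δ := by
      rw [le_div_iff₀ hδ0]; exact mul_le_of_le_one_right hu hδ1
    have h1 : q * (v + u) ^ m * u ≤ q * (2 * (u / δ)) ^ m * u := by
      gcongr <;> first | positivity | linarith
    have hδm : (δ ^ m)⁻¹ = K ^ m * (ε ^ m)⁻¹ := by
      rw [hδdef, div_pow, inv_div, div_eq_mul_inv]
    have h2 : (q : ℝ) * (2 * (u / δ)) ^ m * u = K ^ q * (ε ^ m)⁻¹ * u ^ q := by
      have e : (2 * (u / δ)) ^ m = 2 ^ m * (u ^ m * (K ^ m * (ε ^ m)⁻¹)) := by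
        rw [mul_pow, div_pow, division_def, hδm]
      rw [e, hKm, hqm2]
      push_cast
      ring
    have h3 : (0:ℝ) ≤ ε * (1 + ε) * v ^ q := by positivity
    calc |v ^ q - w ^ q| ≤ q * (v + u) ^ m * u := key
      _ ≤ q * (2 * (u / δ)) ^ m * u := h1
      _ = K ^ q * (ε ^ m)⁻¹ * u ^ q := h2
      _ ≤ _ := by linarith
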